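/- On the category of k-modules, the functor Q with QA = ⊕_{x ∈ A} Sym(A) (where Sym is the free symmetric k-algebra), together with counit ε(⟨x₀⟩) = x₀, ε(⟨x₀,x₁⟩) = x₁, ε(⟨x₀,…,xₙ⟩) = 0 for n ≥ 2, and comultiplication δ(⟨x₀,…,xₙ⟩) = Σ over unordered partitions [n] = A₁|…|A_k of ⟨⟨x₀⟩, ⟨x_{A₁}⟩, …, ⟨x_{A_k}⟩⟩, is a comonad on k-Mod. -/

import Mathlib

universe u

open Finset TensorProduct

/-- Unordered partitions of `Fin n` into nonempty parts, as a `Finset`. -/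
def partitions (n : ℕ) : Finset (Finset (Finset (Fin n))) :=
  Finset.univ.filter fun P =>
    (∅ ∉ P) ∧ ∀ i : Fin n, (P.filter fun s => i ∈ s).card = 1

/-- Partial injections from `Fin m` to `Fin n` (partial isomorphisms `[m] ≃ [n]`). -/
def partialInjs (m n : ℕ) : Finset (Fin m → Option (Fin n)) :=
  Finset.univ.filter fun θ =>
    ∀ i j : Fin m, ∀ a : Fin n, θ i = some a → θ j = some a → i = j

/-- The arrangement (Notation 5) associated to a partial isomorphism
`θ : [m] ≃ [n]`: the tail of the list of index pairs `x_{θ₍₁₎θ₍₂₎}`, i.e.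
everything after the leading entry `(0,0)`: matched pairs `(i, θ i)`, then
unmatched rows `(i, 0)`, then unmatched columns `(0, j)`. -/
def arrangeTail (m n : ℕ) (θ : Fin m → Option (Fin n)) :
    List (Fin (m + 1) × Fin (n + 1)) :=
  ((List.finRange m).filterMap fun i => (θ i).map fun j => (i.succ, j.succ))
    ++ ((List.finRange m).filterMap fun i =>
          if θ i = none then some (i.succ, (0 : Fin (n + 1))) else none)
    ++ ((List.finRange n).filterMap fun j =>
          if ∀ i, θ i ≠ some j then some ((0 : Fin (m + 1)), j.succ) else none)

variable (k : Type u) [CommSemiring k]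

/-- The data of the comonad `Q A = ⊕_{x ∈ A} Sym(A)` on `k`-modules, presented
by its generators `⟨x₀, x₁, …, xₙ⟩` (symmetric multilinear in `x₁,…,xₙ`, but
not in `x₀`): a family of `k`-modules `Q M` together with the generator
functions. -/
structure QPre : Type (u + 1) where
  Q : ∀ (M : Type u) [AddCommMonoid M] [Module k M], Type u
  addQ : ∀ (M : Type u) [AddCommMonoid M] [Module k M], AddCommMonoid (Q M)
  modQ : ∀ (M : Type u) [AddCommMonoid M] [Module k M],
    @Module k (Q M) inferInstance (addQ M)
  gen : ∀ (M : Type u) [AddCommMonoid M] [Module k M],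
    M → (n : ℕ) → (Fin n → M) → Q M

variable {k}

instance (S : QPre k) (M : Type u) [AddCommMonoid M] [Module k M] :
    AddCommMonoid (S.Q M) := S.addQ M

instance (S : QPre k) (M : Type u) [AddCommMonoid M] [Module k M] :
    Module k (S.Q M) := S.modQ M

namespace QPre

/-- The generators `⟨x₀,…,xₙ⟩` are symmetric and multilinear in `x₁,…,xₙ`, and
`Q M` is universal among targets of such symmetric multilinear families: every
family `s x n v`, symmetric multilinear in `v`, factors uniquely through a
`k`-linear map on `Q M`.  (This characterises `Q M = ⊕_{x ∈ M} Sym M`.) -/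
def Lawful (S : QPre k) : Prop :=
  (∀ (M : Type u) [AddCommMonoid M] [Module k M] (x : M) (n : ℕ)
      (v : Fin n → M) (σ : Equiv.Perm (Fin n)),
      S.gen M x n (v ∘ σ) = S.gen M x n v) ∧
  (∀ (M : Type u) [AddCommMonoid M] [Module k M] (x : M) (n : ℕ)
      (v : Fin n → M) (i : Fin n) (a b : M),
      S.gen M x n (Function.update v i (a + b)) =
        S.gen M x n (Function.update v i a) +
          S.gen M x n (Function.update v i b)) ∧
  (∀ (M : Type u) [AddCommMonoid M] [Module k M] (x : M) (n : ℕ)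
      (v : Fin n → M) (i : Fin n) (r : k) (a : M),
      S.gen M x n (Function.update v i (r • a)) =
        r • S.gen M x n (Function.update v i a)) ∧
  (∀ (M : Type u) [AddCommMonoid M] [Module k M]
      (N : Type u) [AddCommMonoid N] [Module k N]
      (s : M → (n : ℕ) → (Fin n → M) → N),
      (∀ x n (v : Fin n → M) (σ : Equiv.Perm (Fin n)), s x n (v ∘ σ) = s x n v) →
      (∀ x n (v : Fin n → M) (i : Fin n) (a b : M),
        s x n (Function.update v i (a + b)) =
          s x n (Function.update v i a) + s x n (Function.update v i b)) →
      (∀ x n (v : Fin n → M) (i : Fin n) (r : k) (a : M),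
        s x n (Function.update v i (r • a)) =
          r • s x n (Function.update v i a)) →
      ∃! φ : S.Q M →ₗ[k] N, ∀ x n v, φ (S.gen M x n v) = s x n v)

/-- `⟨x_I⟩ = ⟨x₀, x_{i₁}, …, x_{i_k}⟩` for `I = {i₁ < … < i_k} ⊆ [n]`. -/
def genPart (S : QPre k) {M : Type u} [AddCommMonoid M] [Module k M]
    (x : M) {n : ℕ} (v : Fin n → M) (s : Finset (Fin n)) : S.Q M :=
  S.gen M x s.card fun i => v ((s.orderIsoOfFin rfl i : Fin n))

end QPre

namespace Stmt14Aux

open Finset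

/-! ### Permutations of lists and index equivalences -/

theorem perm_exists_equiv {α : Type*} {l₁ l₂ : List α} (h : l₁.Perm l₂) :
    ∃ e : Fin l₁.length ≃ Fin l₂.length, ∀ i, l₁.get i = l₂.get (e i) := by
  induction h with
  | nil => exact ⟨Equiv.refl _, fun i => i.elim0⟩
  | cons a h ih =>
    obtain ⟨e, he⟩ := ih
    refine ⟨(finSuccEquiv _).trans ((e.optionCongr).trans (finSuccEquiv _).symm), ?_⟩
    intro i
    refine Fin.cases ?_ (fun j => ?_) i
    · simp
    · simpa using he j
  | swap a b l =>
    refine ⟨Equiv.swap (0 : Fin (l.length + 2)) (1 : Fin (l.length + 2)), fun i => ?_⟩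
    obtain ⟨iv, hi⟩ := i
    match iv, hi with
    | 0, _ => simp [Equiv.swap_apply_def, Fin.ext_iff]
    | 1, _ => simp [Equiv.swap_apply_def, Fin.ext_iff]
    | (m+2), h => simp [Equiv.swap_apply_def, Fin.ext_iff]
  | trans h₁ h₂ ih₁ ih₂ =>
    obtain ⟨e₁, he₁⟩ := ih₁
    obtain ⟨e₂, he₂⟩ := ih₂
    exact ⟨e₁.trans e₂, fun i => (he₁ i).trans (he₂ _)⟩

/-! ### Multiset and Finset helper lemmas -/

theorem image_val_of_injOn' {α β : Type*} [DecidableEq β] {s : Finset α} {f : α → β}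
    (hf : ∀ a ∈ s, ∀ b ∈ s, f a = f b → a = b) : (s.image f).val = s.val.map f := by
  rw [Finset.image_val, Multiset.dedup_eq_self.2]
  exact Multiset.Nodup.map_on (fun a ha b hb => hf a ha b hb) s.nodup

theorem count_univ_val {α : Type*} [Fintype α] [DecidableEq α] (a : α) :
    Multiset.count a (Finset.univ : Finset α).val = 1 :=
  Multiset.count_eq_one_of_mem Finset.univ.nodup (Finset.mem_univ_val a)

theorem count_finset_val {α : Type*} [DecidableEq α] (s : Finset α) (a : α) :
    Multiset.count a s.val = if a ∈ s then 1 else 0 := by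
  by_cases h : a ∈ s
  · simp [h, Multiset.count_eq_one_of_mem s.nodup h]
  · simp [h, Multiset.count_eq_zero_of_notMem h]

theorem nodup_of_bind_val {β : Type*} [DecidableEq β] {M : Multiset (Finset β)}
    (h0 : ∅ ∉ M) (h : (M.bind Finset.val).Nodup) : M.Nodup := by
  rw [Multiset.nodup_iff_count_le_one]
  intro s
  by_contra hc
  push_neg at hc
  have hs : s ∈ M := by
    rw [← Multiset.count_pos]; omega
  have hsne : s ≠ ∅ := fun he => h0 (he ▸ hs)
  obtain ⟨x, hx⟩ := Finset.nonempty_iff_ne_empty.2 hsne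
  have hrep : Multiset.replicate 2 s ≤ M := by
    rw [← Multiset.le_count_iff_replicate_le]; omega
  obtain ⟨M', hM⟩ := Multiset.le_iff_exists_add.1 hrep
  have : (2 : ℕ) ≤ Multiset.count x (M.bind Finset.val) := by
    rw [hM, Multiset.add_bind]
    have : (Multiset.replicate 2 s).bind Finset.val = s.val + s.val := by
      show (s ::ₘ s ::ₘ 0).bind Finset.val = _
      simp [Multiset.cons_bind]
    rw [this]
    have hx1 : (1:ℕ) ≤ Multiset.count x s.val := (Multiset.one_le_count_iff_mem).2 hx
    simp only [Multiset.count_add]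
    omega
  have := (Multiset.nodup_iff_count_le_one.1 h) x
  omega

theorem biUnion_val_eq {α β : Type*} [DecidableEq α] [DecidableEq β] (s : Finset α)
    (t : α → Finset β) (h : (s.val.bind fun a => (t a).val).Nodup) :
    (s.biUnion t).val = s.val.bind fun a => (t a).val := by
  show ((s.val.bind fun a => (t a).val).dedup) = _
  exact Multiset.dedup_eq_self.2 h

theorem biUnion_id_val {β : Type*} [DecidableEq β] (c : Finset (Finset β))
    (h : (c.val.bind Finset.val).Nodup) : (c.biUnion id).val = c.val.bind Finset.val :=
  biUnion_val_eq c id h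

/-! ### partitions as a multiset condition -/

theorem mem_partitions_iff {n : ℕ} {P : Finset (Finset (Fin n))} :
    P ∈ partitions n ↔ ∅ ∉ P ∧ P.val.bind Finset.val = (Finset.univ : Finset (Fin n)).val := by
  rw [partitions, Finset.mem_filter]
  simp only [Finset.mem_univ, true_and]
  refine and_congr_right fun _ => ?_
  rw [Multiset.ext]
  refine forall_congr' fun i => ?_
  rw [count_univ_val, Multiset.count_bind]
  rw [Finset.card_filter]
  rw [Finset.sum]
  have hmc : (Multiset.map (fun b => Multiset.count i b.val) P.val)
      = (Multiset.map (fun s => if i ∈ s then 1 else 0) P.val) :=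
    Multiset.map_congr rfl (fun s _ => count_finset_val s i)
  rw [hmc]

theorem partitions_zero : partitions 0 = {∅} := by
  ext P
  rw [mem_partitions_iff, Finset.mem_singleton]
  constructor
  · rintro ⟨h0, hf⟩
    have huniv : (Finset.univ : Finset (Fin 0)).val = 0 := by simp
    rw [huniv] at hf
    rw [Finset.eq_empty_iff_forall_notMem]
    intro s hs
    have hle : s.val ≤ P.val.bind Finset.val := by
      obtain ⟨M', hM⟩ := Multiset.exists_cons_of_mem (Finset.mem_val.mpr hs)
      rw [hM, Multiset.cons_bind]
      exact Multiset.le_add_right _ _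
    rw [hf] at hle
    have : s.val = 0 := le_antisymm hle (zero_le (a := s.val))
    have hse : s = ∅ := Finset.val_eq_zero.1 this
    exact h0 (hse ▸ hs)
  · rintro rfl
    exact ⟨Finset.notMem_empty _, by simp⟩


/-! ### Partitions carried by a list -/

def partsOnList {β : Type u_1} [DecidableEq β] (l : List β) : Finset (Finset (Finset β)) :=
  (l.toFinset.powerset.powerset).filter fun c => ∅ ∉ c ∧ c.val.bind Finset.val = ↑l

theorem mem_partsOnList {β : Type u_1} [DecidableEq β] {l : List β} {c : Finset (Finset β)} :
    c ∈ partsOnList l ↔ (∀ bl ∈ c, bl ⊆ l.toFinset) ∧ ∅ ∉ c ∧ c.val.bind Finset.val = ↑l := by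
  rw [partsOnList, Finset.mem_filter, Finset.mem_powerset]
  constructor
  · rintro ⟨h1, h2, h3⟩
    exact ⟨fun bl hbl => Finset.mem_powerset.1 (h1 hbl), h2, h3⟩
  · rintro ⟨h1, h2, h3⟩
    exact ⟨fun bl hbl => Finset.mem_powerset.2 (h1 bl hbl), h2, h3⟩

theorem sum_partitions_list {β : Type u_1} {γ : Type u_2} [DecidableEq β] [AddCommMonoid γ]
    (l : List β) (hl : l.Nodup) (F : Multiset (Multiset β) → γ) :
    ∑ R ∈ partitions l.length, F (R.val.map (fun r => r.val.map l.get))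
      = ∑ c ∈ partsOnList l, F (c.val.map Finset.val) := by
  have hget : Function.Injective l.get := List.nodup_iff_injective_get.1 hl
  set push : Finset (Fin l.length) → Finset β := fun r => r.image l.get with hpushdef
  set pull : Finset β → Finset (Fin l.length) :=
    fun bl => Finset.univ.filter fun t => l.get t ∈ bl with hpulldef
  have hpushval : ∀ r, (push r).val = r.val.map l.get := fun r =>
    image_val_of_injOn' fun a _ b _ h => hget h
  have hpushinj : Function.Injective push := Finset.image_injective hget
  have hpullpush : ∀ r, pull (push r) = r := by
    intro r
    ext t
    simp only [hpulldef, hpushdef, Finset.mem_filter, Finset.mem_univ, true_and,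
      Finset.mem_image]
    constructor
    · rintro ⟨t', ht', he⟩
      rwa [← hget he]
    · intro ht
      exact ⟨t, ht, rfl⟩
  have hpushpull : ∀ bl : Finset β, bl ⊆ l.toFinset → push (pull bl) = bl := by
    intro bl hbl
    ext x
    simp only [hpushdef, hpulldef, Finset.mem_image, Finset.mem_filter, Finset.mem_univ,
      true_and]
    constructor
    · rintro ⟨t, ht, rfl⟩
      exact ht
    · intro hx
      obtain ⟨t, rfl⟩ := List.mem_iff_get.1 (List.mem_toFinset.1 (hbl hx))
      exact ⟨t, hx, rfl⟩
  refine Finset.sum_nbij' (fun R => R.image push) (fun c => c.image pull) ?_ ?_ ?_ ?_ ?_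
  · -- maps into partsOnList
    intro R hR
    obtain ⟨hR0, hRf⟩ := mem_partitions_iff.1 hR
    rw [mem_partsOnList]
    refine ⟨?_, ?_, ?_⟩
    · intro bl hbl
      obtain ⟨r, _, rfl⟩ := Finset.mem_image.1 hbl
      intro x hx
      obtain ⟨t, _, rfl⟩ := Finset.mem_image.1 hx
      exact List.mem_toFinset.2 (List.get_mem l _)
    · intro h
      obtain ⟨r, hr, hre⟩ := Finset.mem_image.1 h
      exact hR0 (by rwa [Finset.image_eq_empty.1 hre] at hr)
    · rw [image_val_of_injOn' fun a _ b _ h => hpushinj h]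
      rw [Multiset.bind_map]
      have : ∀ r : Finset (Fin l.length), (push r).val = Multiset.map l.get r.val := hpushval
      calc R.val.bind (fun r => (push r).val)
          = R.val.bind (fun r => Multiset.map l.get r.val) := by
            exact Multiset.bind_congr fun r _ => hpushval r
        _ = Multiset.map l.get (R.val.bind Finset.val) := (Multiset.map_bind _ _ _).symm
        _ = Multiset.map l.get ↑(List.finRange l.length) := by rw [hRf]; rfl
        _ = ↑(List.map l.get (List.finRange l.length)) := rfl
        _ = ↑l := by rw [List.map_get_finRange]
  · -- maps back into partitions
    intro c hc
    obtain ⟨hsub, hc0, hcf⟩ := mem_partsOnList.1 hc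
    have hpullinj : ∀ bl ∈ c, ∀ bl' ∈ c, pull bl = pull bl' → bl = bl' := by
      intro bl hbl bl' hbl' h
      rw [← hpushpull bl (hsub bl hbl), ← hpushpull bl' (hsub bl' hbl'), h]
    rw [mem_partitions_iff]
    constructor
    · intro h
      obtain ⟨bl, hbl, hble⟩ := Finset.mem_image.1 h
      obtain ⟨x, hx⟩ := Finset.nonempty_iff_ne_empty.2 (fun he => hc0 (he ▸ hbl))
      obtain ⟨t, rfl⟩ := List.mem_iff_get.1 (List.mem_toFinset.1 (hsub bl hbl hx))
      have : t ∈ pull bl := by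
        simp only [hpulldef, Finset.mem_filter, Finset.mem_univ, true_and]
        exact hx
      rw [hble] at this
      exact absurd this (Finset.notMem_empty t)
    · rw [image_val_of_injOn' hpullinj]
      rw [Multiset.bind_map]
      refine Multiset.ext.2 fun t => ?_
      rw [count_univ_val, Multiset.count_bind]
      have hmap : Multiset.map (fun bl => Multiset.count t (pull bl).val) c.val
          = Multiset.map (fun bl => Multiset.count (l.get t) bl.val) c.val := by
        refine Multiset.map_congr rfl fun bl _ => ?_
        rw [hpulldef]
        simp only []
        rw [Finset.filter_val, Multiset.count_filter]
        by_cases h : l.get t ∈ bl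
        · rw [if_pos h, count_univ_val, count_finset_val, if_pos h]
        · rw [if_neg h, count_finset_val, if_neg h]
      rw [hmap, ← Multiset.count_bind, hcf]
      exact Multiset.count_eq_one_of_mem (s := (l : Multiset β)) hl (Multiset.mem_coe.2 (List.get_mem l t))
  · -- left inverse
    intro R hR
    show (R.image push).image pull = R
    rw [Finset.image_image]
    calc R.image (pull ∘ push) = R.image id := Finset.image_congr fun r _ => hpullpush r
      _ = R := Finset.image_id
  · -- right inverse
    intro c hc
    obtain ⟨hsub, hc0, hcf⟩ := mem_partsOnList.1 hc
    show (c.image pull).image push = c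
    rw [Finset.image_image]
    calc c.image (push ∘ pull)
        = c.image id := Finset.image_congr fun bl hbl => hpushpull bl (hsub bl (by simpa using hbl))
      _ = c := Finset.image_id
  · -- values agree
    intro R hR
    congr 1
    rw [image_val_of_injOn' fun a _ b _ h => hpushinj h, Multiset.map_map]
    exact Multiset.map_congr rfl fun r _ => (hpushval r).symm


/-! ### The common index set for coassociativity -/

def WSet (n : ℕ) : Finset (Finset (Finset (Finset (Fin n)))) :=
  Finset.univ.filter fun W => ∅ ∉ W ∧ (∀ c ∈ W, ∅ ∉ c) ∧
    (W.val.bind fun c => c.val.bind Finset.val) = (Finset.univ : Finset (Fin n)).val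

theorem mem_WSet {n : ℕ} {W : Finset (Finset (Finset (Fin n)))} :
    W ∈ WSet n ↔ ∅ ∉ W ∧ (∀ c ∈ W, ∅ ∉ c) ∧
      (W.val.bind fun c => c.val.bind Finset.val) = (Finset.univ : Finset (Fin n)).val := by
  rw [WSet, Finset.mem_filter]
  simp only [Finset.mem_univ, true_and]

section WSetFacts

variable {n : ℕ} {W : Finset (Finset (Finset (Fin n)))} (hW : W ∈ WSet n)
include hW

theorem WSet_total_nodup :
    (W.val.bind fun c => c.val.bind Finset.val).Nodup := by
  rw [(mem_WSet.1 hW).2.2]; exact Finset.univ.nodup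

theorem WSet_flat_nodup {c : Finset (Finset (Fin n))} (hc : c ∈ W) :
    (c.val.bind Finset.val).Nodup := by
  refine Multiset.nodup_of_le ?_ (WSet_total_nodup hW)
  obtain ⟨M', hM⟩ := Multiset.exists_cons_of_mem (Finset.mem_val.mpr hc)
  rw [hM, Multiset.cons_bind]
  exact Multiset.le_add_right _ _

theorem WSet_nodup2 : (W.val.bind fun c => c.val).Nodup := by
  refine nodup_of_bind_val ?_ ?_
  · intro h
    obtain ⟨c, hc, h0⟩ := Multiset.mem_bind.1 h
    exact (mem_WSet.1 hW).2.1 c hc h0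
  · rw [Multiset.bind_assoc]
    exact WSet_total_nodup hW

theorem WSet_support_val {c : Finset (Finset (Fin n))} (hc : c ∈ W) :
    (c.biUnion id).val = c.val.bind Finset.val :=
  biUnion_val_eq c id (WSet_flat_nodup hW hc)

theorem WSet_flat_ne_zero {c : Finset (Finset (Fin n))} (hc : c ∈ W) :
    c.val.bind Finset.val ≠ 0 := by
  obtain ⟨h0W, h0c, _⟩ := mem_WSet.1 hW
  intro h
  obtain ⟨bl, hbl⟩ := Finset.nonempty_iff_ne_empty.2 (fun he => h0W (by rw [← he]; exact hc))
  obtain ⟨x, hx⟩ := Finset.nonempty_iff_ne_empty.2 (fun he => h0c c hc (by rw [← he]; exact hbl))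
  have : x ∈ c.val.bind Finset.val := Multiset.mem_bind.2 ⟨bl, hbl, hx⟩
  rw [h] at this
  exact Multiset.notMem_zero x this

theorem WSet_supports_injOn {c c' : Finset (Finset (Fin n))} (hc : c ∈ W) (hc' : c' ∈ W)
    (h : c.biUnion id = c'.biUnion id) : c = c' := by
  by_contra hne
  have hval : c.val.bind Finset.val = c'.val.bind Finset.val := by
    rw [← WSet_support_val hW hc, ← WSet_support_val hW hc', h]
  obtain ⟨M', hM⟩ := Multiset.exists_cons_of_mem (Finset.mem_val.mpr hc)
  have hc'M : c' ∈ M' := by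
    have := Finset.mem_val.mpr hc'
    rw [hM, Multiset.mem_cons] at this
    exact this.resolve_left (Ne.symm hne)
  have htot := WSet_total_nodup hW
  rw [hM, Multiset.cons_bind] at htot
  obtain ⟨-, -, hdisj⟩ := Multiset.nodup_add.1 htot
  have hle : c'.val.bind Finset.val ≤ M'.bind fun c => c.val.bind Finset.val := by
    obtain ⟨M'', hM''⟩ := Multiset.exists_cons_of_mem hc'M
    rw [hM'', Multiset.cons_bind]
    exact Multiset.le_add_right _ _
  have hne0 := WSet_flat_ne_zero hW hc
  obtain ⟨x, hx⟩ := Multiset.exists_mem_of_ne_zero hne0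
  have hx' : x ∈ M'.bind fun c => c.val.bind Finset.val :=
    Multiset.mem_of_le hle (hval ▸ hx)
  exact Multiset.disjoint_iff_ne.1 hdisj x hx x hx' rfl

theorem kappa1_mem : W.biUnion id ∈ partitions n := by
  obtain ⟨h0W, h0c, htot⟩ := mem_WSet.1 hW
  rw [mem_partitions_iff]
  constructor
  · intro h
    obtain ⟨c, hc, h0⟩ := Finset.mem_biUnion.1 h
    exact h0c c hc h0
  · rw [biUnion_val_eq W id (WSet_nodup2 hW), Multiset.bind_assoc]
    exact htot

theorem kappa2_mem : W.image (fun c => c.biUnion id) ∈ partitions n := by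
  obtain ⟨h0W, h0c, htot⟩ := mem_WSet.1 hW
  rw [mem_partitions_iff]
  constructor
  · intro h
    obtain ⟨c, hc, h0⟩ := Finset.mem_image.1 h
    apply WSet_flat_ne_zero hW hc
    rw [← WSet_support_val hW hc, h0]
    rfl
  · rw [image_val_of_injOn' fun a ha b hb h => WSet_supports_injOn hW ha hb h,
      Multiset.bind_map]
    rw [Multiset.bind_congr fun c hc => WSet_support_val hW (Finset.mem_val.mp hc)]
    exact htot

end WSetFacts

theorem fiberA {P : Finset (Finset (Fin n))} (hP : P ∈ partitions n) :
    (WSet n).filter (fun W => W.biUnion id = P) = partsOnList P.toList := by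
  obtain ⟨hP0, hPf⟩ := mem_partitions_iff.1 hP
  ext W
  rw [Finset.mem_filter, mem_partsOnList]
  constructor
  · rintro ⟨hW, hb⟩
    refine ⟨?_, (mem_WSet.1 hW).1, ?_⟩
    · intro c hc x hx
      rw [Finset.toList_toFinset]
      rw [← hb]
      exact Finset.mem_biUnion.2 ⟨c, hc, hx⟩
    · have hv := biUnion_val_eq W id (WSet_nodup2 hW)
      rw [Finset.coe_toList, ← hb]
      exact hv.symm
  · rintro ⟨hsub, h0W, hflat2⟩
    rw [Finset.coe_toList] at hflat2
    have h0c : ∀ c ∈ W, ∅ ∉ c := by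
      intro c hc h0
      apply hP0
      have : (∅ : Finset (Fin n)) ∈ W.val.bind fun c => c.val :=
        Multiset.mem_bind.2 ⟨c, Finset.mem_val.mpr hc, h0⟩
      rw [hflat2] at this
      exact Finset.mem_val.mp this
    have hWmem : W ∈ WSet n := by
      rw [mem_WSet]
      refine ⟨h0W, h0c, ?_⟩
      rw [← Multiset.bind_assoc, hflat2]
      exact hPf
    refine ⟨hWmem, ?_⟩
    apply Finset.val_injective
    rw [biUnion_val_eq W id (WSet_nodup2 hWmem)]
    exact hflat2



set_option maxHeartbeats 1200000 in
theorem sum_piFinset_fiber {n : ℕ} {C : Finset (Finset (Fin n))} (hC : C ∈ partitions n)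
    {γ : Type u_1} [AddCommMonoid γ]
    (F : Multiset (Finset (Finset (Fin n))) → γ) :
    ∑ ρ ∈ Fintype.piFinset
        (fun j : Fin C.toList.length => partsOnList (C.toList.get j).toList),
      F ↑(List.ofFn ρ)
    = ∑ W ∈ (WSet n).filter (fun W => W.image (fun c => c.biUnion id) = C), F W.val := by
  obtain ⟨hC0, hCf⟩ := mem_partitions_iff.1 hC
  set l := C.toList with hldef
  have hlnd : l.Nodup := Finset.nodup_toList C
  have hget : Function.Injective l.get := List.nodup_iff_injective_get.1 hlnd
  have hgetC : ∀ j, l.get j ∈ C := fun j => Finset.mem_toList.1 (List.get_mem l j)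
  -- facts about elements of the pi set
  have hsupp : ∀ (ρ : Fin l.length → Finset (Finset (Fin n))),
      (∀ j, ρ j ∈ partsOnList (l.get j).toList) →
      ∀ j, ((ρ j).biUnion id = l.get j ∧ (ρ j).val.bind Finset.val = (l.get j).val) := by
    intro ρ hρ j
    obtain ⟨hsub, h0, hflat⟩ := mem_partsOnList.1 (hρ j)
    rw [Finset.coe_toList] at hflat
    have hnd : ((ρ j).val.bind Finset.val).Nodup := by rw [hflat]; exact (l.get j).nodup
    refine ⟨?_, hflat⟩
    apply Finset.val_injective
    rw [biUnion_id_val _ hnd, hflat]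
  refine Finset.sum_nbij' (fun ρ => Finset.univ.image ρ)
    (fun W j => (W.filter (fun c => c.biUnion id = l.get j)).sup id) ?_ ?_ ?_ ?_ ?_
  · -- membership in the fiber
    intro ρ hρmem
    have hρ : ∀ j, ρ j ∈ partsOnList (l.get j).toList := Fintype.mem_piFinset.1 hρmem
    have h0ρ : ∀ j, ρ j ≠ ∅ := by
      intro j he
      have := (hsupp ρ hρ j).2
      rw [he] at this
      have : (l.get j).val = 0 := by simpa using this.symm
      exact hC0 (by rw [← Finset.val_eq_zero.1 this]; exact hgetC j)
    have hρinj : Function.Injective ρ := by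
      intro a b h
      apply hget
      rw [← (hsupp ρ hρ a).1, ← (hsupp ρ hρ b).1, h]
    rw [Finset.mem_filter, mem_WSet]
    refine ⟨⟨?_, ?_, ?_⟩, ?_⟩
    · intro h
      obtain ⟨j, _, hj⟩ := Finset.mem_image.1 h
      exact h0ρ j hj
    · intro c hc
      obtain ⟨j, _, rfl⟩ := Finset.mem_image.1 hc
      exact (mem_partsOnList.1 (hρ j)).2.1
    · rw [image_val_of_injOn' fun a _ b _ h => hρinj h, Multiset.bind_map]
      rw [Multiset.bind_congr fun j _ => (hsupp ρ hρ j).2]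
      have h1 : (Finset.univ : Finset (Fin l.length)).val.bind (fun j => (l.get j).val)
          = (l : Multiset (Finset (Fin n))).bind Finset.val := by
        have : (l : Multiset (Finset (Fin n)))
            = Multiset.map l.get (Finset.univ : Finset (Fin l.length)).val := by
          show _ = Multiset.map l.get ↑(List.finRange l.length)
          rw [show Multiset.map l.get ↑(List.finRange l.length)
              = ↑(List.map l.get (List.finRange l.length)) from rfl, List.map_get_finRange]
        rw [this, Multiset.bind_map]
      rw [h1, hldef, Finset.coe_toList]
      exact hCf
    · -- the image of supports is C
      ext s
      rw [Finset.image_image, Finset.mem_image]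
      constructor
      · rintro ⟨j, _, rfl⟩
        show (ρ j).biUnion id ∈ C
        rw [(hsupp ρ hρ j).1]
        exact hgetC j
      · intro hs
        obtain ⟨j, hj⟩ := List.mem_iff_get.1 (Finset.mem_toList.2 hs)
        refine ⟨j, Finset.mem_univ j, ?_⟩
        show (ρ j).biUnion id = s
        rw [(hsupp ρ hρ j).1, hj]
  · -- reverse membership
    intro W hWf
    obtain ⟨hW, himg⟩ := Finset.mem_filter.1 hWf
    have hkey : ∀ j : Fin l.length, ∃ c, (W.filter (fun c => c.biUnion id = l.get j)) = {c}
        ∧ c ∈ W ∧ c.biUnion id = l.get j := by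
      intro j
      have : l.get j ∈ W.image (fun c => c.biUnion id) := by rw [himg]; exact hgetC j
      obtain ⟨c, hc, hcs⟩ := Finset.mem_image.1 this
      refine ⟨c, ?_, hc, hcs⟩
      rw [Finset.eq_singleton_iff_unique_mem]
      refine ⟨Finset.mem_filter.2 ⟨hc, hcs⟩, ?_⟩
      intro c' hc'
      obtain ⟨hc'W, hc's⟩ := Finset.mem_filter.1 hc'
      exact WSet_supports_injOn hW hc'W hc (hc's.trans hcs.symm)
    rw [Fintype.mem_piFinset]
    intro j
    obtain ⟨c, hfil, hcW, hcs⟩ := hkey j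
    show (W.filter (fun c => c.biUnion id = l.get j)).sup id ∈ partsOnList (l.get j).toList
    rw [hfil, Finset.sup_singleton]
    show c ∈ partsOnList (l.get j).toList
    rw [mem_partsOnList]
    refine ⟨?_, (mem_WSet.1 hW).2.1 c hcW, ?_⟩
    · intro bl hbl x hx
      rw [Finset.toList_toFinset, ← hcs]
      exact Finset.mem_biUnion.2 ⟨bl, hbl, hx⟩
    · rw [Finset.coe_toList, ← hcs]
      exact (WSet_support_val hW hcW).symm
  · -- left inverse
    intro ρ hρmem
    have hρ : ∀ j, ρ j ∈ partsOnList (l.get j).toList := Fintype.mem_piFinset.1 hρmem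
    funext j
    have hfil : (Finset.univ.image ρ).filter (fun c => c.biUnion id = l.get j) = {ρ j} := by
      rw [Finset.eq_singleton_iff_unique_mem]
      constructor
      · exact Finset.mem_filter.2 ⟨Finset.mem_image_of_mem ρ (Finset.mem_univ j),
          (hsupp ρ hρ j).1⟩
      · intro c hc
        obtain ⟨hcm, hcs⟩ := Finset.mem_filter.1 hc
        obtain ⟨j', _, rfl⟩ := Finset.mem_image.1 hcm
        congr 1
        apply hget
        rw [← (hsupp ρ hρ j').1, hcs]
    show ((Finset.univ.image ρ).filter (fun c => c.biUnion id = l.get j)).sup id = ρ j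
    rw [hfil, Finset.sup_singleton]
    rfl
  · -- right inverse
    intro W hWf
    obtain ⟨hW, himg⟩ := Finset.mem_filter.1 hWf
    have hkey : ∀ j : Fin l.length, ∃ c, (W.filter (fun c => c.biUnion id = l.get j)) = {c}
        ∧ c ∈ W ∧ c.biUnion id = l.get j := by
      intro j
      have : l.get j ∈ W.image (fun c => c.biUnion id) := by rw [himg]; exact hgetC j
      obtain ⟨c, hc, hcs⟩ := Finset.mem_image.1 this
      refine ⟨c, ?_, hc, hcs⟩
      rw [Finset.eq_singleton_iff_unique_mem]
      refine ⟨Finset.mem_filter.2 ⟨hc, hcs⟩, ?_⟩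
      intro c' hc'
      obtain ⟨hc'W, hc's⟩ := Finset.mem_filter.1 hc'
      exact WSet_supports_injOn hW hc'W hc (hc's.trans hcs.symm)
    ext c
    rw [Finset.mem_image]
    constructor
    · rintro ⟨j, _, rfl⟩
      obtain ⟨c', hfil, hc'W, _⟩ := hkey j
      show (W.filter (fun c => c.biUnion id = l.get j)).sup id ∈ W
      rw [hfil, Finset.sup_singleton]
      exact hc'W
    · intro hc
      have hsC : c.biUnion id ∈ C := by rw [← himg]; exact Finset.mem_image_of_mem _ hc
      obtain ⟨j, hj⟩ := List.mem_iff_get.1 (Finset.mem_toList.2 hsC)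
      refine ⟨j, Finset.mem_univ j, ?_⟩
      obtain ⟨c', hfil, hc'W, hc's⟩ := hkey j
      show (W.filter (fun c => c.biUnion id = l.get j)).sup id = c
      rw [hfil, Finset.sup_singleton]
      show c' = c
      exact WSet_supports_injOn hW hc'W hc (hc's.trans hj)
  · -- values agree
    intro ρ hρmem
    have hρ : ∀ j, ρ j ∈ partsOnList (l.get j).toList := Fintype.mem_piFinset.1 hρmem
    have h0ρ : ∀ j, ρ j ≠ ∅ := by
      intro j he
      have := (hsupp ρ hρ j).2
      rw [he] at this
      have : (l.get j).val = 0 := by simpa using this.symm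
      exact hC0 (by rw [← Finset.val_eq_zero.1 this]; exact hgetC j)
    have hρinj : Function.Injective ρ := by
      intro a b h
      apply hget
      rw [← (hsupp ρ hρ a).1, ← (hsupp ρ hρ b).1, h]
    congr 1
    rw [image_val_of_injOn' fun a _ b _ h => hρinj h]
    rw [List.ofFn_eq_map]
    rfl


/-! ### The generator calculus -/

section GenLayer

variable {k : Type u} [CommSemiring k] {S : QPre k}
variable {M : Type u} [AddCommMonoid M] [Module k M]

theorem gen_congr (x : M) {m m' : ℕ} (h : m = m') (w : Fin m' → M) :
    S.gen M x m (fun i => w (Fin.cast h i)) = S.gen M x m' w := by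
  subst h; rfl

theorem gen0_congr (x : M) (v w : Fin 0 → M) : S.gen M x 0 v = S.gen M x 0 w :=
  congrArg _ (funext fun i => i.elim0)

/-- `⟨x; L⟩` for a list `L`. -/
noncomputable def genList (S : QPre k) {M : Type u} [AddCommMonoid M] [Module k M]
    (x : M) (L : List M) : S.Q M :=
  S.gen M x L.length L.get

/-- `⟨x; m⟩` for a multiset `m`. -/
noncomputable def genMS (S : QPre k) {M : Type u} [AddCommMonoid M] [Module k M]
    (x : M) (m : Multiset M) : S.Q M :=
  genList S x m.toList

theorem genList_map {α : Type u_1} (x : M) (L : List α) (g : α → M) :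
    genList S x (L.map g) = S.gen M x L.length (fun j => g (L.get j)) := by
  have h : (L.map g).length = L.length := List.length_map g
  have he : ∀ i : Fin (L.map g).length,
      (L.map g).get i = (fun j => g (L.get j)) (Fin.cast h i) := by
    intro i
    simp [List.get_eq_getElem, List.getElem_map]
  calc genList S x (L.map g) = S.gen M x (L.map g).length
        (fun i => (fun j => g (L.get j)) (Fin.cast h i)) := by
        unfold genList; exact congrArg _ (funext he)
    _ = S.gen M x L.length (fun j => g (L.get j)) := gen_congr x h (fun j => g (L.get j))

theorem genMS_zero_eq (Y : M) : genMS S Y 0 = S.gen M Y 0 Fin.elim0 := by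
  unfold genMS genList
  rw [Multiset.toList_zero]
  exact gen0_congr Y _ _

variable (hS : S.Lawful)
include hS

theorem genList_perm (x : M) {L₁ L₂ : List M} (h : L₁.Perm L₂) :
    genList S x L₁ = genList S x L₂ := by
  obtain ⟨e, he⟩ := perm_exists_equiv h
  have hl : L₁.length = L₂.length := h.length_eq
  have key : L₁.get = (fun i => L₂.get (Fin.cast hl i)) ∘ (e.trans (finCongr hl).symm) := by
    funext i
    have : Fin.cast hl ((finCongr hl).symm (e i)) = e i := by
      apply Fin.ext; simp [finCongr]
    simp only [Function.comp_apply, Equiv.trans_apply, this]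
    exact he i
  calc genList S x L₁ = S.gen M x L₁.length (L₁.get) := rfl
    _ = S.gen M x L₁.length
        ((fun i => L₂.get (Fin.cast hl i)) ∘ (e.trans (finCongr hl).symm)) := by rw [← key]
    _ = S.gen M x L₁.length (fun i => L₂.get (Fin.cast hl i)) := hS.1 M x _ _ _
    _ = S.gen M x L₂.length L₂.get := gen_congr x hl _

theorem genMS_coe (x : M) (L : List M) : genMS S x ↑L = genList S x L := by
  have hp : ((L : Multiset M)).toList.Perm L :=
    Multiset.coe_eq_coe.1 (by rw [Multiset.coe_toList])
  exact genList_perm hS x hp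

theorem gen_eq_genMS (x : M) (n : ℕ) (v : Fin n → M) :
    S.gen M x n v = genMS S x ↑(List.ofFn v) := by
  rw [genMS_coe hS]
  have : genList S x (List.ofFn v)
      = S.gen M x (List.ofFn v).length (List.ofFn v).get := rfl
  rw [this]
  calc S.gen M x n v
      = S.gen M x (List.ofFn v).length (fun i => v (Fin.cast (List.length_ofFn : (List.ofFn v).length = n) i)) :=
        (gen_congr x (List.length_ofFn : (List.ofFn v).length = n) v).symm
    _ = S.gen M x (List.ofFn v).length (List.ofFn v).get :=
        congrArg _ (funext fun i => (List.get_ofFn v i).symm)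

theorem genMS_val_map {α : Type u_1} (x : M) (s : Finset α) (g : α → M) :
    genMS S x (s.val.map g) = S.gen M x s.toList.length (fun j => g (s.toList.get j)) := by
  have h1 : s.val.map g = ↑(s.toList.map g) := by
    rw [← Multiset.map_coe, Finset.coe_toList]
  rw [h1, genMS_coe hS, genList_map]

theorem genMS_univ (x : M) {n : ℕ} (v : Fin n → M) :
    genMS S x ((Finset.univ : Finset (Fin n)).val.map v) = S.gen M x n v := by
  rw [gen_eq_genMS hS x n v]
  congr 1
  rw [List.ofFn_eq_map]
  rfl

theorem genPart_eq (x : M) {n : ℕ} (v : Fin n → M) (s : Finset (Fin n)) :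
    S.genPart x v s = genMS S x (s.val.map v) := by
  set L := s.sort (· ≤ ·) with hLdef
  have hL : L.length = s.card := Finset.length_sort _
  have hfun : ∀ i : Fin s.card,
      v ((s.orderIsoOfFin rfl i : Fin n)) = (fun j => v (L.get j)) (Fin.cast hL.symm i) := by
    intro i
    have h1 : ((s.orderIsoOfFin rfl i : Fin n)) = L.get (Fin.cast hL.symm i) := by
      rw [Finset.coe_orderIsoOfFin_apply, Finset.orderEmbOfFin_apply]
      rfl
    rw [h1]
  calc S.genPart x v s
      = S.gen M x s.card (fun i => (fun j => v (L.get j)) (Fin.cast hL.symm i)) := by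
        unfold QPre.genPart; exact congrArg _ (funext hfun)
    _ = S.gen M x L.length (fun j => v (L.get j)) := gen_congr x hL.symm (fun j => v (L.get j))
    _ = genList S x (L.map v) := (genList_map x L v).symm
    _ = genMS S x ↑(L.map v) := (genMS_coe hS x _).symm
    _ = genMS S x (s.val.map v) := by rw [← Multiset.map_coe, hLdef, Finset.sort_eq]

theorem qext {N : Type u} [AddCommMonoid N] [Module k N] {φ ψ : S.Q M →ₗ[k] N}
    (h : ∀ x n (v : Fin n → M), φ (S.gen M x n v) = ψ (S.gen M x n v)) : φ = ψ := by
  obtain ⟨θ, hθ, hu⟩ := hS.2.2.2 M N (fun x n v => φ (S.gen M x n v))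
    (fun x n v σ => congrArg φ (hS.1 M x n v σ))
    (fun x n v i a b => by
      show φ (S.gen M x n (Function.update v i (a + b)))
          = φ (S.gen M x n (Function.update v i a)) + φ (S.gen M x n (Function.update v i b))
      rw [hS.2.1 M x n v i a b, map_add])
    (fun x n v i r a => by
      show φ (S.gen M x n (Function.update v i (r • a)))
          = r • φ (S.gen M x n (Function.update v i a))
      rw [hS.2.2.1 M x n v i r a, map_smul])
  exact (hu φ fun x n v => rfl).trans (hu ψ fun x n v => (h x n v).symm).symm

theorem gen_eq_zero (x : M) {n : ℕ} (v : Fin n → M) (i : Fin n) (h : v i = 0) :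
    S.gen M x n v = 0 := by
  have h1 : v = Function.update v i ((0:k) • (0:M)) := by
    rw [zero_smul]
    conv_lhs => rw [← Function.update_eq_self i v]
    rw [h]
  rw [h1, hS.2.2.1, zero_smul]

theorem genMS_eq_zero (x : M) {m : Multiset M} (h : (0:M) ∈ m) : genMS S x m = 0 := by
  obtain ⟨i, hi⟩ := List.mem_iff_get.1 (Multiset.mem_toList.2 h)
  exact gen_eq_zero hS x _ i hi

/-- `S.gen M Y n` as a multilinear map. -/
noncomputable def genML (Y : M) (n : ℕ) : MultilinearMap k (fun _ : Fin n => M) (S.Q M) where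
  toFun v := S.gen M Y n v
  map_update_add' {inst} v i a b := by
    obtain rfl : inst = instDecidableEqFin n := Subsingleton.elim _ _
    exact hS.2.1 M Y n v i a b
  map_update_smul' {inst} v i r a := by
    obtain rfl : inst = instDecidableEqFin n := Subsingleton.elim _ _
    exact hS.2.2.1 M Y n v i r a

end GenLayer

/-! ### Facts about partitions needed for the counit laws -/

theorem univ_mem_partitions {n : ℕ} :
    ({Finset.univ} : Finset (Finset (Fin (n+1)))) ∈ partitions (n+1) := by
  rw [mem_partitions_iff]
  constructor
  · rw [Finset.mem_singleton]
    intro h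
    exact absurd h.symm (Finset.ne_empty_of_mem (Finset.mem_univ 0))
  · show ({Finset.univ} : Multiset (Finset (Fin (n+1)))).bind Finset.val = _
    rw [Multiset.singleton_bind]

theorem partitions_big_of_ne_univ {n : ℕ} {P : Finset (Finset (Fin (n+1)))}
    (hP : P ∈ partitions (n+1)) (hne : P ≠ {Finset.univ}) : 2 ≤ P.card := by
  obtain ⟨hP0, hPf⟩ := mem_partitions_iff.1 hP
  rcases Nat.lt_or_ge P.card 2 with h | h
  · interval_cases hc : P.card
    · exfalso
      rw [Finset.card_eq_zero] at hc
      subst hc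
      simp only [Finset.empty_val, Multiset.zero_bind] at hPf
      have : (0 : Fin (n+1)) ∈ (Finset.univ : Finset (Fin (n+1))).val :=
        Finset.mem_univ_val _
      rw [← hPf] at this
      exact Multiset.notMem_zero _ this
    · exfalso
      obtain ⟨s, rfl⟩ := Finset.card_eq_one.1 hc
      apply hne
      congr 1
      apply Finset.val_injective
      have : ({s} : Finset (Finset (Fin (n+1)))).val.bind Finset.val = s.val := by
        show ({s} : Multiset (Finset (Fin (n+1)))).bind Finset.val = s.val
        rw [Multiset.singleton_bind]
      rw [this] at hPf
      exact hPf
  · exact h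

/-- The partition of `Fin n` into singletons. -/
def singletonPartition (n : ℕ) : Finset (Finset (Fin n)) :=
  Finset.univ.map ⟨fun i => ({i} : Finset (Fin n)), fun a b h => by
    simpa using h⟩

theorem singletonPartition_mem {n : ℕ} : singletonPartition n ∈ partitions n := by
  rw [mem_partitions_iff]
  constructor
  · intro h
    rw [singletonPartition, Finset.mem_map] at h
    obtain ⟨i, _, hi⟩ := h
    have : ({i} : Finset (Fin n)) = ∅ := hi
    exact absurd this (Finset.ne_empty_of_mem (Finset.mem_singleton_self i))
  · rw [singletonPartition, Finset.map_val]
    rw [Multiset.bind_map]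
    have : ∀ i : Fin n, (({i} : Finset (Fin n))).val = ({i} : Multiset (Fin n)) :=
      fun i => rfl
    calc (Finset.univ.val).bind (fun i => (({i} : Finset (Fin n))).val)
        = (Finset.univ.val).bind (fun i => ({i} : Multiset (Fin n))) := rfl
      _ = Multiset.map id Finset.univ.val := Multiset.bind_singleton _ id
      _ = Finset.univ.val := Multiset.map_id _

theorem partitions_exists_big {n : ℕ} {P : Finset (Finset (Fin n))}
    (hP : P ∈ partitions n) (hne : P ≠ singletonPartition n) :
    ∃ s ∈ P, 2 ≤ s.card := by
  obtain ⟨hP0, hPf⟩ := mem_partitions_iff.1 hP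
  by_contra hc
  push_neg at hc
  have hcard1 : ∀ s ∈ P, s.card = 1 := by
    intro s hs
    have h1 : 1 ≤ s.card := by
      rw [Nat.one_le_iff_ne_zero]
      intro h0
      exact hP0 (by rw [← Finset.card_eq_zero.1 h0]; exact hs)
    have h2 := hc s hs
    omega
  apply hne
  ext s
  rw [singletonPartition, Finset.mem_map]
  constructor
  · intro hs
    obtain ⟨i, hi⟩ := Finset.card_eq_one.1 (hcard1 s hs)
    exact ⟨i, Finset.mem_univ i, hi.symm⟩
  · rintro ⟨i, -, rfl⟩
    have : i ∈ P.val.bind Finset.val := by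
      rw [hPf]; exact Finset.mem_univ_val i
    obtain ⟨t, ht, hit⟩ := Multiset.mem_bind.1 this
    have htP : t ∈ P := Finset.mem_val.mp ht
    obtain ⟨j, hj⟩ := Finset.card_eq_one.1 (hcard1 t htP)
    rw [hj] at hit
    have : i = j := by simpa using hit
    show ({i} : Finset (Fin n)) ∈ P
    rw [this, ← hj]
    exact htP


/-! ### Generator computations for `ε`, `δ`, `Qmap` -/

section OpsLayer

variable {k : Type u} [CommSemiring k] {S : QPre k}
variable {M : Type u} [AddCommMonoid M] [Module k M]

theorem genMS_singleton (Y a : M) :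
    genMS S Y {a} = S.gen M Y 1 (fun _ => a) := by
  unfold genMS genList
  rw [Multiset.toList_singleton]
  exact congrArg _ (funext fun i => by
    have h0 : i.1 = 0 := by
      have := i.isLt
      simp only [List.length_singleton] at this
      omega
    have hi : i = ⟨0, Nat.zero_lt_one⟩ := Fin.ext h0
    rw [hi]
    rfl)

theorem eps_genList_two (εM : S.Q M →ₗ[k] M)
    (hε2M : ∀ (x : M) (n : ℕ) (v : Fin (n + 2) → M), εM (S.gen M x (n + 2) v) = 0)
    (Y : M) (L : List M) (h : 2 ≤ L.length) : εM (genList S Y L) = 0 := by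
  rcases L with _ | ⟨a, L2⟩
  · simp at h
  rcases L2 with _ | ⟨b, t⟩
  · simp at h
  exact hε2M Y t.length _

theorem eps_genMS_two (εM : S.Q M →ₗ[k] M)
    (hε2M : ∀ (x : M) (n : ℕ) (v : Fin (n + 2) → M), εM (S.gen M x (n + 2) v) = 0)
    (Y : M) (m : Multiset M) (h : 2 ≤ Multiset.card m) : εM (genMS S Y m) = 0 :=
  eps_genList_two εM hε2M Y m.toList (by rw [Multiset.length_toList]; exact h)

variable (hS : S.Lawful)
include hS

theorem delta_genMS (δM : S.Q M →ₗ[k] S.Q (S.Q M))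
    (hδM : ∀ (x : M) (n : ℕ) (v : Fin n → M),
      δM (S.gen M x n v) =
        ∑ P ∈ partitions n,
          S.gen (S.Q M) (S.genPart x v ∅) P.toList.length
            (fun j => S.genPart x v (P.toList.get j)))
    (x : M) (n : ℕ) (v : Fin n → M) :
    δM (S.gen M x n v) = ∑ P ∈ partitions n,
      genMS S (S.gen M x 0 Fin.elim0) (P.val.map fun s => genMS S x (s.val.map v)) := by
  rw [hδM]
  refine Finset.sum_congr rfl fun P _ => ?_
  have hhead : S.genPart x v ∅ = S.gen M x 0 Fin.elim0 := by
    rw [genPart_eq hS]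
    exact genMS_zero_eq x
  rw [hhead]
  have hterm : (fun j => S.genPart x v (P.toList.get j))
      = fun j => genMS S x ((P.toList.get j).val.map v) :=
    funext fun j => genPart_eq hS x v _
  rw [hterm]
  exact (genMS_val_map hS (S.gen M x 0 Fin.elim0) P (fun s => genMS S x (s.val.map v))).symm

theorem Qmap_genMS {N : Type u} [AddCommMonoid N] [Module k N]
    (Qf : S.Q M →ₗ[k] S.Q N) (f : M →ₗ[k] N)
    (hQf : ∀ (x : M) (n : ℕ) (v : Fin n → M),
      Qf (S.gen M x n v) = S.gen N (f x) n (fun i => f (v i)))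
    (Y : M) (m : Multiset M) : Qf (genMS S Y m) = genMS S (f Y) (m.map f) := by
  show Qf (S.gen M Y m.toList.length m.toList.get) = _
  rw [hQf]
  have h1 : S.gen N (f Y) m.toList.length (fun i => f (m.toList.get i))
      = genList S (f Y) (m.toList.map f) := (genList_map (f Y) m.toList f).symm
  rw [h1, ← genMS_coe hS]
  congr 1
  rw [← Multiset.map_coe, Multiset.coe_toList]

end OpsLayer

end Stmt14Aux


/-!
STATEMENT 14: On the category of `k`-modules, the functor `Q` with
`Q A = ⊕_{x ∈ A} Sym(A)` (presented by its generators, with functorial action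
`Q f ⟨x₀,…,xₙ⟩ = ⟨f x₀,…,f xₙ⟩`), together with counit `ε⟨x₀⟩ = x₀`,
`ε⟨x₀,x₁⟩ = x₁`, `ε⟨x₀,…,xₙ⟩ = 0` for `n ≥ 2`, and comultiplication
`δ⟨x₀,…,xₙ⟩ = ∑_{[n]=A₁|…|A_k} ⟨⟨x₀⟩, ⟨x_{A₁}⟩, …, ⟨x_{A_k}⟩⟩` (sum over
unordered partitions), is a comonad on `k`-Mod: `Q` is functorial, `ε` and `δ`
are natural, and the counit and coassociativity laws hold.
-/
theorem statement14 {k : Type u} [CommSemiring k] (S : QPre k)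
    (hS : S.Lawful)
    (Qmap : ∀ {M N : Type u} [AddCommMonoid M] [Module k M] [AddCommMonoid N]
      [Module k N], (M →ₗ[k] N) → (S.Q M →ₗ[k] S.Q N))
    (hQmap : ∀ (M N : Type u) [AddCommMonoid M] [Module k M] [AddCommMonoid N]
      [Module k N] (f : M →ₗ[k] N) (x : M) (n : ℕ) (v : Fin n → M),
      Qmap f (S.gen M x n v) = S.gen N (f x) n (fun i => f (v i)))
    (εQ : ∀ (M : Type u) [AddCommMonoid M] [Module k M], S.Q M →ₗ[k] M)
    (hε0 : ∀ (M : Type u) [AddCommMonoid M] [Module k M] (x : M)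
      (v : Fin 0 → M), εQ M (S.gen M x 0 v) = x)
    (hε1 : ∀ (M : Type u) [AddCommMonoid M] [Module k M] (x : M)
      (v : Fin 1 → M), εQ M (S.gen M x 1 v) = v 0)
    (hε2 : ∀ (M : Type u) [AddCommMonoid M] [Module k M] (x : M) (n : ℕ)
      (v : Fin (n + 2) → M), εQ M (S.gen M x (n + 2) v) = 0)
    (δQ : ∀ (M : Type u) [AddCommMonoid M] [Module k M],
      S.Q M →ₗ[k] S.Q (S.Q M))
    (hδ : ∀ (M : Type u) [AddCommMonoid M] [Module k M] (x : M) (n : ℕ)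
      (v : Fin n → M),
      δQ M (S.gen M x n v) =
        ∑ P ∈ partitions n,
          S.gen (S.Q M) (S.genPart x v ∅) P.toList.length
            (fun j => S.genPart x v (P.toList.get j))) :
    -- functoriality of Q
    (∀ (M : Type u) [AddCommMonoid M] [Module k M] (ξ : S.Q M),
      Qmap (LinearMap.id : M →ₗ[k] M) ξ = ξ) ∧
    (∀ (M N P : Type u) [AddCommMonoid M] [Module k M] [AddCommMonoid N]
        [Module k N] [AddCommMonoid P] [Module k P]
        (f : M →ₗ[k] N) (g : N →ₗ[k] P) (ξ : S.Q M),
      Qmap (g ∘ₗ f) ξ = Qmap g (Qmap f ξ)) ∧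
    -- naturality of ε and δ
    (∀ (M N : Type u) [AddCommMonoid M] [Module k M] [AddCommMonoid N]
        [Module k N] (f : M →ₗ[k] N) (ξ : S.Q M),
      εQ N (Qmap f ξ) = f (εQ M ξ)) ∧
    (∀ (M N : Type u) [AddCommMonoid M] [Module k M] [AddCommMonoid N]
        [Module k N] (f : M →ₗ[k] N) (ξ : S.Q M),
      δQ N (Qmap f ξ) = Qmap (Qmap f) (δQ M ξ)) ∧
    -- counit laws
    (∀ (M : Type u) [AddCommMonoid M] [Module k M] (ξ : S.Q M),
      εQ (S.Q M) (δQ M ξ) = ξ) ∧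
    (∀ (M : Type u) [AddCommMonoid M] [Module k M] (ξ : S.Q M),
      Qmap (εQ M) (δQ M ξ) = ξ) ∧
    -- coassociativity
    (∀ (M : Type u) [AddCommMonoid M] [Module k M] (ξ : S.Q M),
      δQ (S.Q M) (δQ M ξ) = Qmap (δQ M) (δQ M ξ)) := by
  open Stmt14Aux in
  refine ⟨?_, ?_, ?_, ?_, ?_, ?_, ?_⟩
  · -- Qmap id = id
    intro M _ _ ξ
    have h : Qmap (LinearMap.id : M →ₗ[k] M) = (LinearMap.id : S.Q M →ₗ[k] S.Q M) :=
      qext hS fun x n v => by rw [hQmap M M LinearMap.id x n v]; rfl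
    exact LinearMap.congr_fun h ξ
  · -- Qmap comp
    intro M N P _ _ _ _ _ _ f g ξ
    have h : Qmap (g ∘ₗ f) = (Qmap g) ∘ₗ (Qmap f) := qext hS fun x n v => by
      show Qmap (g ∘ₗ f) (S.gen M x n v) = Qmap g (Qmap f (S.gen M x n v))
      rw [hQmap M P (g ∘ₗ f) x n v, hQmap M N f x n v, hQmap N P g (f x) n _]
      rfl
    exact LinearMap.congr_fun h ξ
  · -- ε naturality
    intro M N _ _ _ _ f ξ
    have h : (εQ N) ∘ₗ (Qmap f) = f ∘ₗ (εQ M) := qext hS fun x n v => by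
      show εQ N (Qmap f (S.gen M x n v)) = f (εQ M (S.gen M x n v))
      rw [hQmap M N f x n v]
      match n, v with
      | 0, v => rw [hε0, hε0]
      | 1, v => rw [hε1, hε1]
      | (n+2), v => rw [hε2, hε2, map_zero]
    exact LinearMap.congr_fun h ξ
  · -- δ naturality
    intro M N _ _ _ _ f ξ
    have h : (δQ N) ∘ₗ (Qmap f) = (Qmap (Qmap f)) ∘ₗ (δQ M) := qext hS fun x n v => by
      show δQ N (Qmap f (S.gen M x n v)) = Qmap (Qmap f) (δQ M (S.gen M x n v))
      rw [hQmap M N f x n v,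
        delta_genMS hS (δQ N) (hδ N) (f x) n (fun i => f (v i)),
        delta_genMS hS (δQ M) (hδ M) x n v, map_sum]
      refine Finset.sum_congr rfl fun P _ => ?_
      rw [Qmap_genMS hS (Qmap (Qmap f)) (Qmap f) (hQmap (S.Q M) (S.Q N) (Qmap f))]
      have e1 : Qmap f (S.gen M x 0 Fin.elim0) = S.gen N (f x) 0 Fin.elim0 := by
        rw [hQmap M N f x 0 Fin.elim0]
        exact gen0_congr (f x) _ _
      have e2 : (Multiset.map (fun s => genMS S x (s.val.map v)) P.val).map (Qmap f)
          = P.val.map (fun s => genMS S (f x) (s.val.map fun i => f (v i))) := by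
        rw [Multiset.map_map]
        refine Multiset.map_congr rfl fun s _ => ?_
        show Qmap f (genMS S x (s.val.map v)) = _
        rw [Qmap_genMS hS (Qmap f) f (hQmap M N f), Multiset.map_map]
        rfl
      rw [e1, e2]
    exact LinearMap.congr_fun h ξ
  · -- counit law 1
    intro M _ _ ξ
    have h : (εQ (S.Q M)) ∘ₗ (δQ M) = (LinearMap.id : S.Q M →ₗ[k] S.Q M) :=
      qext hS fun x n v => by
        show εQ (S.Q M) (δQ M (S.gen M x n v)) = S.gen M x n v
        rw [delta_genMS hS (δQ M) (hδ M) x n v, map_sum]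
        match n, v with
        | 0, v =>
          rw [partitions_zero, Finset.sum_singleton]
          have h0 : ((∅ : Finset (Finset (Fin 0))).val.map
              fun s => genMS S x (s.val.map v)) = 0 := rfl
          rw [h0, genMS_zero_eq, hε0]
          exact gen0_congr x _ v
        | (m+1), v =>
          rw [Finset.sum_eq_single_of_mem ({Finset.univ} : Finset (Finset (Fin (m+1))))
            univ_mem_partitions ?_]
          · have h1 : (({Finset.univ} : Finset (Finset (Fin (m+1)))).val.map
                fun s => genMS S x (s.val.map v))
                = {genMS S x ((Finset.univ : Finset (Fin (m+1))).val.map v)} := rfl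
            rw [h1, genMS_singleton, hε1]
            exact genMS_univ hS x v
          · intro P hP hne
            refine eps_genMS_two (εQ (S.Q M)) (hε2 (S.Q M)) _ _ ?_
            rw [Multiset.card_map]
            exact partitions_big_of_ne_univ hP hne
    exact LinearMap.congr_fun h ξ
  · -- counit law 2
    intro M _ _ ξ
    have h : (Qmap (εQ M)) ∘ₗ (δQ M) = (LinearMap.id : S.Q M →ₗ[k] S.Q M) :=
      qext hS fun x n v => by
        show Qmap (εQ M) (δQ M (S.gen M x n v)) = S.gen M x n v
        rw [delta_genMS hS (δQ M) (hδ M) x n v, map_sum]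
        rw [Finset.sum_eq_single_of_mem (singletonPartition n) singletonPartition_mem ?_]
        · rw [Qmap_genMS hS (Qmap (εQ M)) (εQ M) (hQmap (S.Q M) M (εQ M))]
          have e1 : εQ M (S.gen M x 0 Fin.elim0) = x := hε0 M x _
          rw [e1, Multiset.map_map]
          have e3 : (singletonPartition n).val.map
              ((εQ M) ∘ (fun s => genMS S x (s.val.map v))) = Finset.univ.val.map v := by
            rw [singletonPartition, Finset.map_val, Multiset.map_map]
            refine Multiset.map_congr rfl fun i _ => ?_
            show εQ M (genMS S x ((({i} : Finset (Fin n))).val.map v)) = v i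
            have h4 : ((({i} : Finset (Fin n))).val.map v) = {v i} := rfl
            rw [h4, genMS_singleton]
            exact hε1 M x _
          rw [e3]
          exact genMS_univ hS x v
        · intro P hP hne
          obtain ⟨s, hsP, hcard⟩ := partitions_exists_big hP hne
          rw [Qmap_genMS hS (Qmap (εQ M)) (εQ M) (hQmap (S.Q M) M (εQ M))]
          refine genMS_eq_zero hS _ ?_
          rw [Multiset.map_map]
          refine Multiset.mem_map.2 ⟨s, Finset.mem_val.mpr hsP, ?_⟩
          show εQ M (genMS S x (s.val.map v)) = 0
          refine eps_genMS_two (εQ M) (hε2 M) _ _ ?_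
          rw [Multiset.card_map]
          exact hcard
    exact LinearMap.congr_fun h ξ
  · -- coassociativity
    intro M _ _ ξ
    have h : (δQ (S.Q M)) ∘ₗ (δQ M) = (Qmap (δQ M)) ∘ₗ (δQ M) := qext hS fun x n v => by
      show δQ (S.Q M) (δQ M (S.gen M x n v)) = Qmap (δQ M) (δQ M (S.gen M x n v))
      set X : S.Q M := S.gen M x 0 Fin.elim0 with hX
      set XX : S.Q (S.Q M) := S.gen (S.Q M) X 0 Fin.elim0 with hXX
      set gp : Finset (Fin n) → S.Q M := fun s => genMS S x (s.val.map v) with hgp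
      set H : Finset (Finset (Fin n)) → S.Q (S.Q M) :=
        fun c => genMS S X (c.val.map gp) with hH
      set G : Multiset (Finset (Finset (Fin n))) → S.Q (S.Q (S.Q M)) :=
        fun w => genMS S XX (w.map H) with hG
      have lhs_eq : δQ (S.Q M) (δQ M (S.gen M x n v)) = ∑ W ∈ WSet n, G W.val := by
        rw [delta_genMS hS (δQ M) (hδ M) x n v, map_sum]
        have step1 : ∀ P ∈ partitions n,
            δQ (S.Q M) (genMS S X (P.val.map gp)) = ∑ c ∈ partsOnList P.toList, G c.val := by
          intro P _
          rw [genMS_val_map hS X P gp]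
          rw [delta_genMS hS (δQ (S.Q M)) (hδ (S.Q M)) X P.toList.length _]
          have e : ∀ Q : Finset (Finset (Fin P.toList.length)),
              genMS S (S.gen (S.Q M) X 0 Fin.elim0)
                (Q.val.map fun b => genMS S X (b.val.map fun j => gp (P.toList.get j)))
              = genMS S XX ((Q.val.map fun b => b.val.map P.toList.get).map
                  (fun t => genMS S X (t.map gp))) := by
            intro Q
            rw [Multiset.map_map]
            refine congrArg _ (Multiset.map_congr rfl fun b _ => ?_)
            show genMS S X (b.val.map fun j => gp (P.toList.get j))
                = genMS S X ((b.val.map P.toList.get).map gp)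
            rw [Multiset.map_map]
            rfl
          rw [Finset.sum_congr rfl fun Q _ => e Q]
          rw [sum_partitions_list P.toList (Finset.nodup_toList P)
            (fun w => genMS S XX (w.map (fun t => genMS S X (t.map gp))))]
          refine Finset.sum_congr rfl fun c _ => ?_
          show genMS S XX ((c.val.map Finset.val).map (fun t => genMS S X (t.map gp)))
              = G c.val
          rw [hG, Multiset.map_map]
          rfl
        rw [Finset.sum_congr rfl step1]
        rw [Finset.sum_congr rfl fun P hP =>
          (by rw [fiberA hP] :
            (∑ W ∈ (WSet n).filter (fun W => W.biUnion id = P), G W.val)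
              = ∑ c ∈ partsOnList P.toList, G c.val).symm]
        exact Finset.sum_fiberwise_of_maps_to (fun W hW => kappa1_mem hW) (fun W => G W.val)
      have hδX : δQ M X = XX := by
        rw [hX, delta_genMS hS (δQ M) (hδ M) x 0 Fin.elim0, partitions_zero,
          Finset.sum_singleton]
        have h0 : ((∅ : Finset (Finset (Fin 0))).val.map
            fun s => genMS S x (s.val.map Fin.elim0)) = 0 := rfl
        rw [h0, genMS_zero_eq]
      have inner : ∀ s : Finset (Fin n), δQ M (gp s) = ∑ c ∈ partsOnList s.toList, H c := by
        intro s
        rw [hgp]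
        show δQ M (genMS S x (s.val.map v)) = _
        rw [genMS_val_map hS x s v]
        rw [delta_genMS hS (δQ M) (hδ M) x s.toList.length _]
        have e : ∀ R : Finset (Finset (Fin s.toList.length)),
            genMS S (S.gen M x 0 Fin.elim0)
              (R.val.map fun r => genMS S x (r.val.map fun t => v (s.toList.get t)))
            = genMS S X ((R.val.map fun r => r.val.map s.toList.get).map
                (fun t => genMS S x (t.map v))) := by
          intro R
          rw [Multiset.map_map]
          refine congrArg _ (Multiset.map_congr rfl fun r _ => ?_)
          show genMS S x (r.val.map fun t => v (s.toList.get t))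
              = genMS S x ((r.val.map s.toList.get).map v)
          rw [Multiset.map_map]
          rfl
        rw [Finset.sum_congr rfl fun R _ => e R]
        rw [sum_partitions_list s.toList (Finset.nodup_toList s)
          (fun w => genMS S X (w.map (fun t => genMS S x (t.map v))))]
        refine Finset.sum_congr rfl fun c _ => ?_
        show genMS S X ((c.val.map Finset.val).map (fun t => genMS S x (t.map v))) = H c
        rw [hH, Multiset.map_map]
        rfl
      have rhs_eq : Qmap (δQ M) (δQ M (S.gen M x n v)) = ∑ W ∈ WSet n, G W.val := by
        rw [delta_genMS hS (δQ M) (hδ M) x n v, map_sum]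
        have main : ∀ P ∈ partitions n,
            Qmap (δQ M) (genMS S X (P.val.map gp))
              = ∑ W ∈ (WSet n).filter (fun W => W.image (fun c => c.biUnion id) = P),
                  G W.val := by
          intro P hP
          rw [Qmap_genMS hS (Qmap (δQ M)) (δQ M) (hQmap (S.Q M) (S.Q (S.Q M)) (δQ M))]
          rw [hδX, Multiset.map_map]
          have e2 : P.val.map ((δQ M) ∘ gp)
              = P.val.map (fun s => ∑ c ∈ partsOnList s.toList, H c) :=
            Multiset.map_congr rfl fun s _ => inner s
          rw [e2]
          rw [genMS_val_map hS XX P (fun s => ∑ c ∈ partsOnList s.toList, H c)]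
          have hml : S.gen (S.Q (S.Q M)) XX P.toList.length
              (fun j => ∑ c ∈ partsOnList ((P.toList.get j).toList), H c)
              = ∑ ρ ∈ Fintype.piFinset
                  (fun j : Fin P.toList.length => partsOnList ((P.toList.get j).toList)),
                  S.gen (S.Q (S.Q M)) XX P.toList.length (fun j => H (ρ j)) :=
            (genML hS XX P.toList.length).map_sum_finset (fun _ c => H c)
              (fun j => partsOnList ((P.toList.get j).toList))
          rw [hml]
          have e3 : ∀ ρ ∈ Fintype.piFinset
              (fun j : Fin P.toList.length => partsOnList ((P.toList.get j).toList)),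
              S.gen (S.Q (S.Q M)) XX P.toList.length (fun j => H (ρ j))
                = G ↑(List.ofFn ρ) := by
            intro ρ _
            rw [gen_eq_genMS hS XX P.toList.length (fun j => H (ρ j)), hG]
            congr 1
            rw [Multiset.map_coe, List.map_ofFn]
            rfl
          rw [Finset.sum_congr rfl e3]
          exact sum_piFinset_fiber hP G
        rw [Finset.sum_congr rfl main]
        exact Finset.sum_fiberwise_of_maps_to (fun W hW => kappa2_mem hW) (fun W => G W.val)
      rw [lhs_eq, rhs_eq]
    exact LinearMap.congr_fun h ξ
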